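/- Suppose 0 < α ≤ 1/2 and Y_T(s) ≥ y_α(s) for all s ≥ 0. Then for any 0 ≤ t ≤ α^{−3/2} and any γ ≥ 1, on the event R(T, t, αγ) one has Y_{T+t}(s) ≥ y_α(s) for all s ≥ 0. -/

import Mathlib

open MeasureTheory ProbabilityTheory Filter Set

noncomputable section

/-- A continuous-time simple random walk on `ℤ` with jump rate `1`, started at `0`:
at rate `1` it jumps to `±1` with probability `1/2` each.  The law is axiomatized via
right-continuous step paths with jumps of size `1`, stationary independent increments,
and the explicit one-dimensional marginal distribution (the difference of two independent
`Poisson (t/2)` variables). -/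
structure SRW (Ω : Type) [MeasurableSpace Ω] where
  μ : Measure Ω
  prob : IsProbabilityMeasure μ
  W : ℝ → Ω → ℤ
  meas : ∀ t : ℝ, Measurable (W t)
  start : ∀ t : ℝ, t ≤ 0 → ∀ ω, W t ω = 0
  right_const : ∀ ω, ∀ t : ℝ, ∃ ε > 0, ∀ s ∈ Set.Ico t (t + ε), W s ω = W t ω
  unit_jumps : ∀ ω, ∀ t : ℝ, ∃ ε > 0, ∀ s ∈ Set.Ioo (t - ε) t, (W t ω - W s ω).natAbs ≤ 1
  marginal : ∀ t : ℝ, 0 ≤ t → ∀ k : ℤ,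
    μ {ω | W t ω = k} = ENNReal.ofReal
      (Real.exp (-t) * ∑' n : ℕ, (t / 2) ^ (2 * n + k.natAbs) /
        (n.factorial * (n + k.natAbs).factorial))
  stationary : ∀ s t : ℝ, 0 ≤ s → s ≤ t →
    μ.map (fun ω => W t ω - W s ω) = μ.map (W (t - s))
  indep_incr : ∀ n : ℕ, ∀ t : Fin (n + 1) → ℝ, Monotone t → 0 ≤ t 0 →
    iIndepFun
      (fun i : Fin n => fun ω => W (t i.succ) ω - W (t i.castSucc) ω) μ

/-- One-dimensional multi-particle diffusion limited aggregation with particle density `K`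
(restricted to the right half-line; `X t` is the rightmost site of the aggregate at time `t`).

Initially each site of `ℤ` receives an independent `Poisson K` number of particles (`η`),
particles move as independent rate-1 continuous-time simple random walks until frozen
(`pos`), and a particle freezes (its site being added to the aggregate) when it attempts
to jump onto the aggregate.  The law of the rightmost-site process `X` is axiomatized
through its conditional jump intensity
`S(t) = (K/2)·P[ ∀ s ≤ t, W s ≤ X t - X (t-s) ]` (`W` an independent rate-1 walk):
the compensated process `X t - ∫_0^t S(u) du` is a martingale (`intensity`). -/
structure MDLA1D (K : ℝ) (Ω Ω' : Type) [MeasurableSpace Ω] [MeasurableSpace Ω'] where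
  μ : Measure Ω
  prob : IsProbabilityMeasure μ
  /-- the underlying filtration of the process -/
  F : MeasureTheory.Filtration ℝ (inferInstance : MeasurableSpace Ω)
  /-- the rightmost site of the aggregate at time `t` (`= 0` for `t ≤ 0`) -/
  X : ℝ → Ω → ℤ
  X_neg : ∀ t : ℝ, t ≤ 0 → ∀ ω, X t ω = 0
  X_mono : ∀ ω, Monotone fun t => X t ω
  X_adapted : ∀ t : ℝ, Measurable[F t] (X t)
  X_right_const : ∀ ω, ∀ t : ℝ, ∃ ε > 0, ∀ s ∈ Set.Ico t (t + ε), X s ω = X t ω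
  X_unit_jumps : ∀ ω, ∀ t : ℝ, ∃ ε > 0, ∀ s ∈ Set.Ioo (t - ε) t, X t ω - X s ω ≤ 1
  /-- an auxiliary independent rate-1 walk, used to express the jump intensity -/
  walk : SRW Ω'
  /-- initial number of particles at each site: i.i.d. `Poisson K` -/
  η : ℤ → Ω → ℕ
  η_meas : ∀ z : ℤ, Measurable (η z)
  η_law : ∀ z : ℤ, ∀ n : ℕ, μ {ω | η z ω = n} =
    ENNReal.ofReal (Real.exp (-K) * K ^ n / n.factorial)
  η_indep : iIndepFun η μ
  /-- position at time `t` of the `n`-th particle started at site `z` (frozen particles stop) -/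
  pos : ℤ × ℕ → ℝ → Ω → ℤ
  pos_init : ∀ j : ℤ × ℕ, ∀ t : ℝ, t ≤ 0 → ∀ ω, pos j t ω = j.1
  /-- once a particle's site is absorbed into the aggregate it is frozen forever -/
  pos_freeze : ∀ j : ℤ × ℕ, ∀ ω, ∀ t : ℝ, pos j t ω ≤ X t ω →
    ∀ u : ℝ, t ≤ u → pos j u ω = pos j t ω
  /-- the compensated counting process is a martingale: `X` jumps at conditional rate
  `S(t) = (K/2)·P[ ∀ s ∈ [0,t], W s ≤ X t - X (t-s) ]`. -/
  intensity : Martingale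
    (fun t ω => (X t ω : ℝ) - ∫ u in Set.Ioc (0:ℝ) t,
      K / 2 * (walk.μ {w | ∀ s ∈ Set.Icc (0:ℝ) u,
        (walk.W s w : ℝ) ≤ ((X u ω - X (u - s) ω : ℤ) : ℝ)}).toReal) F μ

namespace MDLA1D

variable {K : ℝ} {Ω Ω' : Type} [MeasurableSpace Ω] [MeasurableSpace Ω']

/-- `Y t s = X t - X (t-s)` for `0 ≤ s ≤ t` and `Y t s = ∞` for `s > t`. -/
def Y (M : MDLA1D K Ω Ω') (t s : ℝ) (ω : Ω) : EReal :=
  if s ≤ t then (((M.X t ω - M.X (t - s) ω : ℤ) : ℝ) : EReal) else ⊤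

/-- The conditional rate `S(t) = (K/2)·P[ ∀ s ∈ [0,t], W s ≤ Y t s | Y t ]` at which `X`
increases; since the auxiliary walk `W` is independent of the process, the conditional
probability given `Y t` is obtained by plugging the realized function `Y t · ω` into the
law of `W`. -/
def S (M : MDLA1D K Ω Ω') (t : ℝ) (ω : Ω) : ℝ :=
  K / 2 * (M.walk.μ {w | ∀ s ∈ Set.Icc (0:ℝ) t,
    ((M.walk.W s w : ℝ) : EReal) ≤ M.Y t s ω}).toReal

/-- The σ-algebra generated by the random function `Y t`. -/
def sigmaY (M : MDLA1D K Ω Ω') (t : ℝ) : MeasurableSpace Ω :=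
  MeasurableSpace.comap (fun ω s => M.Y t s ω) inferInstance

/-- The event `R(t,s,γ) = {X_(t+s) - X_t ≥ γ s}`. -/
def R (M : MDLA1D K Ω Ω') (t s γ : ℝ) : Set Ω :=
  {ω | γ * s ≤ ((M.X (t + s) ω - M.X t ω : ℤ) : ℝ)}

/-- `Y t` is permissive at scale `i` if `Y t (2^i) ≥ 10·i·2^(i/2)`. -/
def permissive (M : MDLA1D K Ω Ω') (t : ℝ) (i : ℕ) (ω : Ω) : Prop :=
  ((10 * i * (2:ℝ) ^ ((i:ℝ)/2) : ℝ) : EReal) ≤ M.Y t ((2:ℝ) ^ (i:ℕ)) ω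

end MDLA1D

/-- The conditional probability of an event `E` given a sub-σ-algebra `m'`,
as a conditional expectation of the indicator of `E`. -/
def condP {Ω : Type} [MeasurableSpace Ω] (μ : MeasureTheory.Measure Ω)
    (m' : MeasurableSpace Ω) (E : Set Ω) : Ω → ℝ :=
  MeasureTheory.condExp (m := m') (μ := μ) (f := E.indicator (fun _ => (1 : ℝ)))

/-- The barrier function `y_α`: `y_α s = 0` for `s ≤ α^(-3/2)` and
`y_α s = min (α (s - α^(-3/2))) (√s · log₂ s)` for `s ≥ α^(-3/2)`. -/
def yFun (α s : ℝ) : ℝ :=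
  if s ≤ α ^ (-(3:ℝ)/2) then 0
  else min (α * (s - α ^ (-(3:ℝ)/2))) (Real.sqrt s * Real.logb 2 s)

lemma logb_ge_nat_aux {u : ℝ} (hu : 0 < u) (m : ℕ) (h : (2:ℝ) ^ m ≤ u) :
    (m : ℝ) ≤ Real.logb 2 u := by
  have hL : (0:ℝ) < Real.log 2 := Real.log_pos one_lt_two
  have hlog : Real.log ((2:ℝ) ^ m) ≤ Real.log u :=
    Real.log_le_log (by positivity) h
  rw [Real.log_pow] at hlog
  rw [Real.logb, le_div_iff₀ hL]
  exact_mod_cast hlog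

set_option maxHeartbeats 1000000 in
/-- growth bound in the regime where the cap is active. -/
lemma sqrt_logb_growth {α t u : ℝ} (hα0 : 0 < α) (hα : α ≤ 1/2)
    (ht0 : 0 ≤ t) (htu : t ≤ u) (hu2 : 2 < u)
    (hB : Real.sqrt u * Real.logb 2 u ≤ α * u) :
    Real.sqrt (u + t) * Real.logb 2 (u + t) ≤ Real.sqrt u * Real.logb 2 u + α * t := by
  have hu0 : (0:ℝ) < u := by linarith
  set v : ℝ := Real.sqrt u with hv_def
  set b : ℝ := Real.logb 2 u with hb_def
  set L : ℝ := Real.log 2 with hL_def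
  have hv : 0 < v := Real.sqrt_pos.mpr hu0
  have hv2 : v ^ 2 = u := Real.sq_sqrt hu0.le
  have hL : (0.6931:ℝ) < L := by
    have := Real.log_two_gt_d9; rw [hL_def]; linarith
  have hL0 : (0:ℝ) < L := by linarith
  -- b ≤ α v
  have hbav : b ≤ α * v := by nlinarith [hB, hv2, hv]
  have hhalf : α * v ≤ v / 2 := by nlinarith [mul_le_mul_of_nonneg_right hα hv.le]
  -- bootstrap: α v ≥ 7
  have hb1 : (1:ℝ) ≤ b := by
    have := logb_ge_nat_aux hu0 1 (by norm_num; linarith)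
    simpa using this
  have hv2' : (2:ℝ) ≤ v := by nlinarith
  have hu4 : (4:ℝ) ≤ u := by nlinarith
  have hb2 : (2:ℝ) ≤ b := by
    have := logb_ge_nat_aux hu0 2 (by norm_num; linarith)
    simpa using this
  have hv4 : (4:ℝ) ≤ v := by nlinarith
  have hu16 : (16:ℝ) ≤ u := by nlinarith
  have hb4 : (4:ℝ) ≤ b := by
    have := logb_ge_nat_aux hu0 4 (by norm_num; linarith)
    simpa using this
  have hv8 : (8:ℝ) ≤ v := by nlinarith
  have hu64 : (64:ℝ) ≤ u := by nlinarith
  have hb6 : (6:ℝ) ≤ b := by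
    have := logb_ge_nat_aux hu0 6 (by norm_num; linarith)
    simpa using this
  have hv12 : (12:ℝ) ≤ v := by nlinarith
  have hu144 : (144:ℝ) ≤ u := by nlinarith
  have hb7 : (7:ℝ) ≤ b := by
    have := logb_ge_nat_aux hu0 7 (by norm_num; linarith)
    simpa using this
  have hαv : (7:ℝ) ≤ α * v := le_trans hb7 hbav
  -- logarithm bound
  have hst0 : (0:ℝ) < u + t := by linarith
  have hlog_ratio : Real.log ((u + t) / u) ≤ t / u := by
    have h := Real.log_le_sub_one_of_pos (show (0:ℝ) < (u + t) / u by positivity)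
    have h2 : (u + t) / u - 1 = t / u := by field_simp; ring
    linarith [h2 ▸ h]
  have hlog_s : Real.log (u + t) ≤ Real.log u + t / u := by
    have hdiv : Real.log ((u + t) / u) = Real.log (u + t) - Real.log u :=
      Real.log_div (by positivity) (by positivity)
    linarith [hdiv ▸ hlog_ratio]
  have hlogb_s : Real.logb 2 (u + t) ≤ b + t / (u * L) := by
    have heq : b + t / (u * L) = (Real.log u + t / u) / L := by
      rw [hb_def, Real.logb, ← hL_def]; field_simp
    rw [heq, Real.logb, ← hL_def]
    exact div_le_div_of_nonneg_right hlog_s hL0.le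
  -- sqrt bound
  have hsq : Real.sqrt (u + t) ≤ v + t / (2 * v) := by
    have hw : (0:ℝ) ≤ v + t / (2 * v) := by positivity
    have hle : u + t ≤ (v + t / (2 * v)) ^ 2 := by
      have hvv : v * (t / (2 * v)) = t / 2 := by field_simp
      nlinarith [sq_nonneg (t / (2 * v)), hv2]
    calc Real.sqrt (u + t) ≤ Real.sqrt ((v + t / (2 * v)) ^ 2) := Real.sqrt_le_sqrt hle
      _ = v + t / (2 * v) := Real.sqrt_sq hw
  -- combine
  have hlogb_s_nonneg : (0:ℝ) ≤ Real.logb 2 (u + t) :=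
    Real.logb_nonneg one_lt_two (by linarith)
  have hRHS0 : (0:ℝ) ≤ v + t / (2 * v) := by positivity
  have hmain : Real.sqrt (u + t) * Real.logb 2 (u + t) ≤
      (v + t / (2 * v)) * (b + t / (u * L)) :=
    mul_le_mul hsq hlogb_s hlogb_s_nonneg hRHS0
  have hexp : (v + t / (2 * v)) * (b + t / (u * L)) =
      v * b + t * b / (2 * v) + (t / (v * L) + t ^ 2 / (2 * v ^ 3 * L)) := by
    rw [← hv2]; field_simp
  have hprod : (7:ℝ) * 0.6931 ≤ α * v * L :=
    le_trans (by norm_num) (mul_le_mul hαv hL.le (by norm_num) (by linarith))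
  have hbnd1 : t * b / (2 * v) ≤ α * t / 2 := by
    rw [div_le_div_iff₀ (by positivity) (by norm_num)]
    nlinarith [mul_le_mul_of_nonneg_left hbav ht0]
  have hbnd2 : t / (v * L) ≤ 21/100 * (α * t) := by
    rw [div_le_iff₀ (by positivity)]
    nlinarith [mul_le_mul_of_nonneg_left hprod ht0]
  have hbnd3 : t ^ 2 / (2 * v ^ 3 * L) ≤ 11/100 * (α * t) := by
    rw [div_le_iff₀ (by positivity)]
    have ht2 : t ^ 2 ≤ t * v ^ 2 := by nlinarith
    nlinarith [mul_le_mul_of_nonneg_left hprod (mul_nonneg ht0 (sq_nonneg v))]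
  have hαt : (0:ℝ) ≤ α * t := by positivity
  calc Real.sqrt (u + t) * Real.logb 2 (u + t)
      ≤ (v + t / (2 * v)) * (b + t / (u * L)) := hmain
    _ = v * b + t * b / (2 * v) + (t / (v * L) + t ^ 2 / (2 * v ^ 3 * L)) := hexp
    _ ≤ v * b + α * t / 2 + (21/100 * (α * t) + 11/100 * (α * t)) := by
        linarith
    _ ≤ v * b + α * t := by linarith

/-- the key deterministic barrier inequality: `y_α(s) ≤ y_α(s-t) + α t`
for `0 ≤ t ≤ α^(-3/2)`. -/
lemma yFun_key {α t : ℝ} (hα0 : 0 < α) (hα : α ≤ 1/2)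
    (ht0 : 0 ≤ t) (ht : t ≤ α ^ (-(3:ℝ)/2)) (s : ℝ) :
    yFun α s ≤ yFun α (s - t) + α * t := by
  set c : ℝ := α ^ (-(3:ℝ)/2) with hc_def
  have hc2 : (2:ℝ) ≤ c := by
    have h1 : α ^ (-(1:ℝ)) ≤ α ^ (-(3:ℝ)/2) :=
      Real.rpow_le_rpow_of_exponent_ge hα0 (by linarith) (by norm_num)
    have h2 : α ^ (-(1:ℝ)) = α⁻¹ := Real.rpow_neg_one α
    have h3 : (2:ℝ) ≤ α⁻¹ := by
      rw [show (2:ℝ) = (1/2:ℝ)⁻¹ by norm_num]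
      exact inv_anti₀ hα0 hα
    rw [hc_def]; linarith [h2 ▸ h1]
  have hαt : (0:ℝ) ≤ α * t := by positivity
  rw [yFun, yFun, ← hc_def]
  by_cases hsc : s ≤ c
  · rw [if_pos hsc, if_pos (by linarith : s - t ≤ c)]
    linarith
  · push_neg at hsc
    rw [if_neg (not_le.mpr hsc)]
    by_cases huc : s - t ≤ c
    · rw [if_pos huc]
      calc min (α * (s - c)) (Real.sqrt s * Real.logb 2 s)
          ≤ α * (s - c) := min_le_left _ _
        _ ≤ 0 + α * t := by nlinarith
    · push_neg at huc
      rw [if_neg (not_le.mpr huc)]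
      by_cases hAB : α * (s - t - c) ≤ Real.sqrt (s - t) * Real.logb 2 (s - t)
      · rw [min_eq_left hAB]
        calc min (α * (s - c)) (Real.sqrt s * Real.logb 2 s)
            ≤ α * (s - c) := min_le_left _ _
          _ = α * (s - t - c) + α * t := by ring
      · push_neg at hAB
        rw [min_eq_right hAB.le]
        have hu2 : (2:ℝ) < s - t := by linarith
        have htu : t ≤ s - t := by linarith
        have hB : Real.sqrt (s - t) * Real.logb 2 (s - t) ≤ α * (s - t) := by
          nlinarith
        have hkey := sqrt_logb_growth hα0 hα ht0 htu hu2 hB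
        rw [show s - t + t = s by ring] at hkey
        calc min (α * (s - c)) (Real.sqrt s * Real.logb 2 s)
            ≤ Real.sqrt s * Real.logb 2 s := min_le_right _ _
          _ ≤ Real.sqrt (s - t) * Real.logb 2 (s - t) + α * t := hkey

/-- Suppose `0 < α ≤ 1/2` and `Y_T(s) ≥ y_α(s)` for all `s ≥ 0`.  Then for any
`0 ≤ t ≤ α^(-3/2)` and any `γ ≥ 1`, on the event `R(T, t, αγ)` one has
`Y_(T+t)(s) ≥ y_α(s)` for all `s ≥ 0`. -/
theorem barrier_persists {K : ℝ} (hK : 0 < K)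
    {Ω Ω' : Type} [MeasurableSpace Ω] [MeasurableSpace Ω'] (M : MDLA1D K Ω Ω')
    (α : ℝ) (hα0 : 0 < α) (hα : α ≤ 1/2) (T : ℝ) (hT : 0 ≤ T)
    (t : ℝ) (ht0 : 0 ≤ t) (ht : t ≤ α ^ (-(3:ℝ)/2)) (γ : ℝ) (hγ : 1 ≤ γ) (ω : Ω)
    (hY : ∀ s : ℝ, 0 ≤ s → ((yFun α s : ℝ) : EReal) ≤ M.Y T s ω)
    (hR : ω ∈ M.R T t (α * γ)) :
    ∀ s : ℝ, 0 ≤ s → ((yFun α s : ℝ) : EReal) ≤ M.Y (T + t) s ω := by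
  intro s hs0
  by_cases hsT : s ≤ T + t
  · rw [MDLA1D.Y, if_pos hsT, EReal.coe_le_coe_iff]
    by_cases hsc : s ≤ α ^ (-(3:ℝ)/2)
    · rw [yFun, if_pos hsc]
      have hmono : M.X (T + t - s) ω ≤ M.X (T + t) ω :=
        M.X_mono ω (by linarith : T + t - s ≤ T + t)
      have : (0:ℤ) ≤ M.X (T + t) ω - M.X (T + t - s) ω := by omega
      exact_mod_cast this
    · push_neg at hsc
      have hts : t ≤ s := le_trans ht hsc.le
      have hst0 : 0 ≤ s - t := by linarith
      have hstT : s - t ≤ T := by linarith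
      -- barrier at time T
      have h1 := hY (s - t) hst0
      rw [MDLA1D.Y, if_pos hstT, EReal.coe_le_coe_iff] at h1
      -- jump bound from R
      have hR' : (α * γ) * t ≤ ((M.X (T + t) ω - M.X T ω : ℤ) : ℝ) := hR
      have hαγt : α * t ≤ (α * γ) * t := by
        nlinarith [mul_nonneg (mul_nonneg hα0.le ht0) (sub_nonneg.mpr hγ)]
      -- key inequality
      have hkey := yFun_key hα0 hα ht0 ht s
      have heq : T + t - s = T - (s - t) := by ring
      have hsplit : ((M.X (T + t) ω - M.X (T + t - s) ω : ℤ) : ℝ) =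
          ((M.X (T + t) ω - M.X T ω : ℤ) : ℝ) +
          ((M.X T ω - M.X (T - (s - t)) ω : ℤ) : ℝ) := by
        rw [heq]; push_cast; ring
      rw [hsplit]
      linarith
  · rw [MDLA1D.Y, if_neg hsT]
    exact le_top

end
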